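/- Fix 1 ≤ ξ < ω₁ and let (x_k) be a block sequence in 𝔛_{0,1}^{ω^ξ}. Then α_{<ω^ξ}((x_k)) = 0 if and only if for every ε > 0 and every n ∈ ℕ there exist j_0, k_0 ∈ ℕ such that for every k ≥ k_0 and every 𝓢_{ξ_n}-admissible very fast growing sequence (α_q)_{q=1}^d of α-averages in W with s(α_q) > j_0 for all q = 1,…,d, one has Σ_{q=1}^d |α_q(x_k)| < ε. -/

import Mathlib

open Filter Topology

noncomputable section

/-- The first uncountable ordinal `ω₁`. -/
def omega1 : Ordinal := (Cardinal.aleph 1).ord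

/-- The combinatorial operation `𝓕[𝓖]` on families of finite subsets of `ℕ`:
all unions `E₁ ∪ ⋯ ∪ Eₙ` with `E₁ < ⋯ < Eₙ` nonempty members of `𝓖` and
`(min Eᵢ)ᵢ ∈ 𝓕`. -/
def famOp (F G : Set (Finset ℕ)) : Set (Finset ℕ) :=
  {E | ∃ (n : ℕ) (Es : ℕ → Finset ℕ),
    (∀ i < n, Es i ∈ G) ∧ (∀ i < n, (Es i).Nonempty) ∧
    (∀ i j : ℕ, i < j → j < n → ∀ a ∈ Es i, ∀ b ∈ Es j, a < b) ∧
    (Finset.image (fun i => sInf ((Es i : Set ℕ))) (Finset.range n) ∈ F) ∧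
    E = (Finset.range n).biUnion Es}

/-- The first Schreier family `𝓢₁ = {E : |E| ≤ min E}`. -/
def schreierOne : Set (Finset ℕ) := {E : Finset ℕ | ∀ n ∈ E, E.card ≤ n}

/-- A system of Schreier families `(𝓢_ξ)` together with the fixed cofinal sequences
`(ξ_n)` used at countable limit ordinals: `𝓢_0 = {∅} ∪ {{n} : n ∈ ℕ}`,
`𝓢_{ξ+1} = 𝓢₁[𝓢_ξ]`, and at a countable limit `ξ`,
`𝓢_ξ = {E : ∃ n, n ≤ min E ∧ E ∈ 𝓢_{ξ_n}}` where `ξ_n ↑ ξ` and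
`𝓢_{ξ_n} ⊆ 𝓢_{ξ_{n+1}}`. -/
structure SchreierSystem where
  S : Ordinal → Set (Finset ℕ)
  seq : Ordinal → ℕ → Ordinal
  S_zero : S 0 = {E : Finset ℕ | E = ∅ ∨ ∃ n : ℕ, E = {n}}
  S_succ : ∀ ξ : Ordinal, S (ξ + 1) = famOp schreierOne (S ξ)
  seq_strictMono : ∀ ξ : Ordinal, ξ < omega1 → Order.IsSuccLimit ξ → StrictMono (seq ξ)
  seq_lt : ∀ ξ : Ordinal, ξ < omega1 → Order.IsSuccLimit ξ → ∀ n : ℕ, seq ξ n < ξ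
  seq_iSup : ∀ ξ : Ordinal, ξ < omega1 → Order.IsSuccLimit ξ → (⨆ n : ℕ, seq ξ n) = ξ
  S_seq_mono : ∀ ξ : Ordinal, ξ < omega1 → Order.IsSuccLimit ξ → ∀ n : ℕ, S (seq ξ n) ⊆ S (seq ξ (n + 1))
  S_limit : ∀ ξ : Ordinal, ξ < omega1 → Order.IsSuccLimit ξ →
    S ξ = {E : Finset ℕ | ∃ n : ℕ, (∀ m ∈ E, n ≤ m) ∧ E ∈ S (seq ξ n)}

section XSpace

/-- Finitely supported real sequences `c₀₀`. -/
abbrev c00 : Type := ℕ →₀ ℝ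

/-- The action of a functional `f ∈ c₀₀` on a vector `x ∈ c₀₀`: `f(x) = Σ_i f i * x i`. -/
def dotc (f x : c00) : ℝ := f.sum fun i a => a * x i

/-- Successive supports: every element of `supp f` is smaller than every element of
`supp g`. -/
def suppLt (f g : c00) : Prop := ∀ i ∈ f.support, ∀ j ∈ g.support, i < j

/-- The minimum of the support of `f`. -/
def minSupp (f : c00) : ℕ := sInf {i : ℕ | f i ≠ 0}

/-- The maximum of the support of `f` (`0` for `f = 0`). -/
def maxSupp (f : c00) : ℕ := f.support.sup id

/-- `α` is an `α`-average of size `ℓ` in `G`: an element of `G` of the form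
`(1/ℓ) (f_1 + ⋯ + f_d)` with `f_1 < ⋯ < f_d ∈ G`, `d ≤ ℓ` and `ℓ ≥ 2`. -/
def IsAvg (G : Set c00) (α : c00) (ℓ : ℕ) : Prop :=
  α ∈ G ∧ 2 ≤ ℓ ∧ ∃ (d : ℕ) (f : ℕ → c00), 1 ≤ d ∧ d ≤ ℓ ∧ (∀ q < d, f q ∈ G) ∧
    (∀ q : ℕ, q + 1 < d → suppLt (f q) (f (q + 1))) ∧
    α = (ℓ : ℝ)⁻¹ • ∑ q ∈ Finset.range d, f q

/-- `(α_q)_{q<d}` (with sizes `sz q`) is a very fast growing and `Fam`-admissible sequence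
of `α`-averages in `G`. -/
def IsVFGAdm (G : Set c00) (Fam : Set (Finset ℕ)) (α : ℕ → c00) (sz : ℕ → ℕ) (d : ℕ) : Prop :=
  (∀ q < d, IsAvg G (α q) (sz q)) ∧
  (∀ q : ℕ, q + 1 < d → suppLt (α q) (α (q + 1))) ∧
  (∀ q : ℕ, q + 1 < d → sz q < sz (q + 1)) ∧
  (∀ q : ℕ, q + 1 < d → maxSupp (α q) < sz (q + 1)) ∧
  ((Finset.range d).image fun q => minSupp (α q)) ∈ Fam

/-- One step of the inductive construction of the norming set: `W_{m+1}` from `W_m`. -/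
def Wstep (Fam : Set (Finset ℕ)) (G : Set c00) : Set c00 :=
  G ∪
  {g | ∃ (ℓ d : ℕ) (f : ℕ → c00), 2 ≤ ℓ ∧ 1 ≤ d ∧ d ≤ ℓ ∧ (∀ q < d, f q ∈ G) ∧
      (∀ q : ℕ, q + 1 < d → suppLt (f q) (f (q + 1))) ∧
      g = (ℓ : ℝ)⁻¹ • ∑ q ∈ Finset.range d, f q} ∪
  {g | ∃ (d : ℕ) (α : ℕ → c00) (sz : ℕ → ℕ), 1 ≤ d ∧ IsVFGAdm G Fam α sz d ∧
      g = ∑ q ∈ Finset.range d, α q}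

/-- The levels `W_m` of the norming set: `W_0 = {± e_n}` and `W_{m+1} = Wstep Fam W_m`. -/
def Wlevel (Fam : Set (Finset ℕ)) : ℕ → Set c00
  | 0 => {f | ∃ n : ℕ, f = Finsupp.single n 1 ∨ f = -Finsupp.single n 1}
  | m + 1 => Wstep Fam (Wlevel Fam m)

/-- The norming set `W = ⋃_m W_m` (for `Fam = 𝓢_{ω^ξ}` this is the norming set of
`𝔛_{0,1}^{ω^ξ}`). -/
def Wset (Fam : Set (Finset ℕ)) : Set c00 := ⋃ m : ℕ, Wlevel Fam m

/-- The norm of `𝔛_{0,1}^{ω^ξ}` on finitely supported vectors: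
`‖x‖ = sup {f(x) : f ∈ W}`. -/
noncomputable def Xnorm (Fam : Set (Finset ℕ)) (x : c00) : ℝ :=
  sSup {r : ℝ | ∃ f ∈ Wset Fam, r = dotc f x}

/-- A block sequence of the unit vector basis: nonzero finitely supported vectors with
successive supports. -/
def IsBlock (x : ℕ → c00) : Prop :=
  (∀ n, x n ≠ 0) ∧ ∀ m n : ℕ, m < n → suppLt (x m) (x n)

/-- A normalized block sequence of the unit vector basis of the space with norming
family `Fam`. -/
def IsNormBlock (Fam : Set (Finset ℕ)) (x : ℕ → c00) : Prop :=
  IsBlock x ∧ ∀ n, Xnorm Fam (x n) = 1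

end XSpace

/-- The index `α_{<ω^ξ}((x_k)) = 0`: for every `n`, every very fast growing sequence
`(α_q)` of `α`-averages in `W`, every successive sequence `(F_k)` of finite sets such
that each `(α_q)_{q ∈ F_k}` is `𝓢_{ξ_n}`-admissible (where `(ξ_n)` is the fixed sequence
defining `𝓢_{ω^ξ}`), and every subsequence `(x_{m_k})`,
`lim_k Σ_{q ∈ F_k} |α_q(x_{m_k})| = 0`. -/
def AlphaZero (SS : SchreierSystem) (ξ : Ordinal) (x : ℕ → c00) : Prop :=
  ∀ (n : ℕ) (α : ℕ → c00) (sz : ℕ → ℕ),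
    (∀ q : ℕ, IsAvg (Wset (SS.S (Ordinal.omega0 ^ ξ))) (α q) (sz q)) →
    (∀ q : ℕ, suppLt (α q) (α (q + 1))) →
    (∀ q : ℕ, sz q < sz (q + 1)) →
    (∀ q : ℕ, maxSupp (α q) < sz (q + 1)) →
    ∀ F : ℕ → Finset ℕ,
      (∀ m k : ℕ, m < k → ∀ i ∈ F m, ∀ j ∈ F k, i < j) →
      (∀ k : ℕ, ((F k).image fun q => minSupp (α q)) ∈
          SS.S (SS.seq (Ordinal.omega0 ^ ξ) n)) →
      ∀ m : ℕ → ℕ, StrictMono m →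
        Filter.Tendsto (fun k => ∑ q ∈ F k, |dotc (α q) (x (m k))|)
          Filter.atTop (nhds 0)

/-! ### Auxiliary lemmas -/

section AuxBasic

lemma minSupp_mem {f : c00} (hf : f ≠ 0) : f (minSupp f) ≠ 0 := by
  have : {i : ℕ | f i ≠ 0}.Nonempty := by
    obtain ⟨i, hi⟩ := Finsupp.support_nonempty_iff.2 hf
    exact ⟨i, Finsupp.mem_support_iff.1 hi⟩
  exact Nat.sInf_mem this

lemma minSupp_le {f : c00} {i : ℕ} (hi : f i ≠ 0) : minSupp f ≤ i := Nat.sInf_le hi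

lemma le_maxSupp {f : c00} {i : ℕ} (hi : f i ≠ 0) : i ≤ maxSupp f := by
  have : i ∈ f.support := Finsupp.mem_support_iff.2 hi
  simpa [maxSupp] using Finset.le_sup (f := id) this

lemma suppLt_minSupp_lt {f g : c00} (h : suppLt f g) (hf : f ≠ 0) (hg : g ≠ 0) :
    minSupp f < minSupp g :=
  h _ (Finsupp.mem_support_iff.2 (minSupp_mem hf)) _
      (Finsupp.mem_support_iff.2 (minSupp_mem hg))

lemma suppLt_trans {f g h : c00} (hg : g ≠ 0) (h1 : suppLt f g) (h2 : suppLt g h) :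
    suppLt f h := by
  obtain ⟨k, hk⟩ := Finsupp.support_nonempty_iff.2 hg
  exact fun i hi j hj => lt_trans (h1 i hi k hk) (h2 k hk j hj)

lemma suppLt_chain {α : ℕ → c00} {d : ℕ} (hc : ∀ q, q + 1 < d → suppLt (α q) (α (q + 1)))
    (hnz : ∀ q < d, α q ≠ 0) : ∀ a b, a < b → b < d → suppLt (α a) (α b) := by
  intro a b hab hbd
  induction b with
  | zero => omega
  | succ b ih =>
    rcases Nat.lt_or_ge a b with h | h
    · exact suppLt_trans (hnz b (by omega)) (ih h (by omega)) (hc b hbd)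
    · have : a = b := by omega
      subst this; exact hc a hbd

lemma sum_apply_chain {α : ℕ → c00} {d j : ℕ} (hj : j < d)
    (hc : ∀ q, q + 1 < d → suppLt (α q) (α (q + 1)))
    (hnz : ∀ q < d, α q ≠ 0) {i : ℕ} (hi : α j i ≠ 0) :
    (∑ q ∈ Finset.range d, α q) i = α j i := by
  rw [Finsupp.finset_sum_apply]
  refine Finset.sum_eq_single_of_mem j (Finset.mem_range.2 hj) ?_
  intro q hq hqj
  by_contra h
  have hq' : q < d := Finset.mem_range.1 hq
  rcases Nat.lt_or_ge q j with hlt | hge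
  · exact lt_irrefl i (suppLt_chain hc hnz q j hlt hj i
      (Finsupp.mem_support_iff.2 h) i (Finsupp.mem_support_iff.2 hi))
  · have : j < q := by omega
    exact lt_irrefl i (suppLt_chain hc hnz j q this hq' i
      (Finsupp.mem_support_iff.2 hi) i (Finsupp.mem_support_iff.2 h))

lemma sum_chain_ne_zero {α : ℕ → c00} {d : ℕ} (hd : 1 ≤ d)
    (hc : ∀ q, q + 1 < d → suppLt (α q) (α (q + 1)))
    (hnz : ∀ q < d, α q ≠ 0) : (∑ q ∈ Finset.range d, α q) ≠ 0 := by
  intro h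
  have h0 := hnz 0 hd
  have := sum_apply_chain hd hc hnz (minSupp_mem h0)
  rw [h] at this
  exact minSupp_mem h0 this.symm

lemma sInf_mem_finset {s : Finset ℕ} (h : s.Nonempty) : sInf (s : Set ℕ) ∈ s := by
  have : (s : Set ℕ).Nonempty := by exact_mod_cast h
  exact_mod_cast Nat.sInf_mem this

lemma finset_sInf_le {s : Finset ℕ} {a : ℕ} (h : a ∈ s) : sInf (s : Set ℕ) ≤ a :=
  Nat.sInf_le (by exact_mod_cast h)

end AuxBasic

section Ordinals

universe u_ord in
lemma omega_opow_lt_omega1 (SS : SchreierSystem) : ∀ ξ : Ordinal.{0}, ξ < omega1 →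
    Ordinal.omega0 ^ ξ < omega1 := by
  intro ξ
  induction ξ using Ordinal.induction with
  | _ ξ ih =>
    intro hξ
    have homega : Ordinal.omega0 < omega1 := by
      rw [← Cardinal.ord_aleph0]
      exact Cardinal.ord_lt_ord.2 (by simpa using Cardinal.aleph0_lt_aleph_one)
    rcases Ordinal.zero_or_succ_or_isSuccLimit ξ with h0 | ⟨η, rfl⟩ | hlim
    · subst h0
      rw [Ordinal.opow_zero]
      exact lt_trans (by simpa using Ordinal.one_lt_omega0) homega
    · rw [Ordinal.opow_succ]
      unfold omega1
      rw [Cardinal.lt_ord, Ordinal.card_mul, Ordinal.card_omega0]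
      have h1 : (Ordinal.omega0 ^ η).card < Cardinal.aleph 1 := by
        rw [← Cardinal.lt_ord]
        exact ih η (Order.lt_succ η) (lt_trans (Order.lt_succ η) hξ)
      exact Cardinal.mul_lt_of_lt (by simp [Cardinal.aleph0_le_aleph]) h1
        Cardinal.aleph0_lt_aleph_one
    · have hsup := SS.seq_iSup ξ hξ hlim
      have hlt : ∀ n, Ordinal.omega0 ^ (SS.seq ξ n) < omega1 := fun n =>
        ih _ (SS.seq_lt ξ hξ hlim n) (lt_trans (SS.seq_lt ξ hξ hlim n) hξ)
      have hsup2 : (⨆ n : ℕ, Ordinal.omega0 ^ (SS.seq ξ n)) < omega1 := by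
        simp only [omega1, Cardinal.ord_aleph] at hlt ⊢
        exact Ordinal.iSup_lt_omega_one hlt
      refine lt_of_le_of_lt ?_ hsup2
      rw [Ordinal.opow_le_of_isSuccLimit Ordinal.omega0_ne_zero hlim]
      intro b hb
      rw [← hsup] at hb
      obtain ⟨n, hn⟩ := Ordinal.lt_iSup_iff.1 hb
      exact le_trans (Ordinal.opow_le_opow_right Ordinal.omega0_pos hn.le)
        (Ordinal.le_iSup (fun n => Ordinal.omega0 ^ SS.seq ξ n) n)

end Ordinals

section GoodS

/-- `F'` is dominated by `F`: there is a strictly increasing map from `F'` into `F`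
which does not exceed the identity. -/
def Dominates (F F' : Finset ℕ) : Prop :=
  ∃ ψ : ℕ → ℕ, (∀ b ∈ F', ψ b ∈ F) ∧ (∀ a ∈ F', ∀ b ∈ F', a < b → ψ a < ψ b) ∧
    (∀ b ∈ F', ψ b ≤ b)

lemma goodS (SS : SchreierSystem) : ∀ ζ : Ordinal, ζ < omega1 →
    ∀ F ∈ SS.S ζ, ∀ F' : Finset ℕ, Dominates F F' → F' ∈ SS.S ζ := by
  intro ζ
  induction ζ using Ordinal.induction with
  | _ ζ ih =>
    intro hζ F hF F' hdom
    obtain ⟨ψ, hmem, hmono, hle⟩ := hdom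
    rcases Ordinal.zero_or_succ_or_isSuccLimit ζ with h0 | ⟨η, rfl⟩ | hlim
    · subst h0
      rw [SS.S_zero] at hF ⊢
      rcases hF with h | ⟨n, rfl⟩
      · subst h
        left
        rw [Finset.eq_empty_iff_forall_notMem]
        intro b hb
        simpa using hmem b hb
      · have hcard : ∀ a ∈ F', ∀ b ∈ F', a = b := by
          intro a ha b hb
          by_contra hne
          rcases Nat.lt_or_ge a b with h | h
          · have := hmono a ha b hb h
            have ha' := hmem a ha; have hb' := hmem b hb
            simp only [Finset.mem_singleton] at ha' hb'
            omega
          · have h' : b < a := by omega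
            have := hmono b hb a ha h'
            have ha' := hmem a ha; have hb' := hmem b hb
            simp only [Finset.mem_singleton] at ha' hb'
            omega
        by_cases hne : F' = ∅
        · exact Or.inl hne
        · obtain ⟨a, ha⟩ := Finset.nonempty_iff_ne_empty.2 hne
          refine Or.inr ⟨a, ?_⟩
          ext b
          simp only [Finset.mem_singleton]
          constructor
          · intro hb; exact hcard b hb a ha
          · intro hb; subst hb; exact ha
    · have hη : η < omega1 := lt_trans (Order.lt_succ η) hζ
      have hsucc : SS.S (Order.succ η) = famOp schreierOne (SS.S η) := by
        rw [← Ordinal.add_one_eq_succ]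
        exact SS.S_succ η
      rw [hsucc] at hF ⊢
      obtain ⟨n, Es, hEsG, hEsne, hEssucc, hmins, hFeq⟩ := hF
      -- old mins are distinct and ≥ n
      have hminslt : ∀ i j, i < j → j < n → sInf ((Es i : Set ℕ)) < sInf ((Es j : Set ℕ)) := by
        intro i j hij hjn
        exact hEssucc i j hij hjn _ (sInf_mem_finset (hEsne i (by omega)))
          _ (sInf_mem_finset (hEsne j hjn))
      have hminsinj : Set.InjOn (fun i => sInf ((Es i : Set ℕ))) (Finset.range n) := by
        intro i hi j hj hij
        simp only [Finset.coe_range, Set.mem_Iio] at hi hj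
        by_contra hne
        rcases Nat.lt_or_ge i j with h | h
        · exact absurd hij (ne_of_lt (hminslt i j h hj))
        · exact absurd hij.symm (ne_of_lt (hminslt j i (by omega) hi))
      have hcardold : (Finset.image (fun i => sInf ((Es i : Set ℕ))) (Finset.range n)).card = n := by
        rw [Finset.card_image_of_injOn hminsinj, Finset.card_range]
      have hngemin : ∀ i < n, n ≤ sInf ((Es i : Set ℕ)) := by
        intro i hi
        have : sInf ((Es i : Set ℕ)) ∈ Finset.image (fun i => sInf ((Es i : Set ℕ)))
            (Finset.range n) := Finset.mem_image_of_mem _ (Finset.mem_range.2 hi)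
        have := hmins _ this
        omega
      -- the kept indices
      classical
      set kept : Finset ℕ := (Finset.range n).filter (fun i => ∃ b ∈ F', ψ b ∈ Es i) with hkept
      set K : ℕ := kept.card with hK
      set e : ℕ → ℕ := fun j => if h : j < K then kept.orderEmbOfFin rfl ⟨j, h⟩ else 0 with he
      have he_mem : ∀ j < K, e j ∈ kept := by
        intro j hj
        simp only [he, dif_pos hj]
        exact Finset.orderEmbOfFin_mem kept rfl _
      have he_mono : ∀ j j', j < j' → j' < K → e j < e j' := by
        intro j j' hjj' hj'
        simp only [he, dif_pos hj', dif_pos (lt_trans hjj' hj')]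
        exact (kept.orderEmbOfFin rfl).strictMono (by exact_mod_cast hjj')
      have he_surj : ∀ i ∈ kept, ∃ j < K, e j = i := by
        intro i hi
        have : i ∈ Set.range (kept.orderEmbOfFin (rfl : kept.card = K)) := by
          rw [Finset.range_orderEmbOfFin]; exact_mod_cast hi
        obtain ⟨⟨j, hj⟩, hji⟩ := this
        exact ⟨j, hj, by simp only [he]; rw [dif_pos hj]; exact hji⟩
      set Es' : ℕ → Finset ℕ := fun j => F'.filter (fun b => ψ b ∈ Es (e j)) with hEs'
      have hKn : K ≤ n := by
        calc K = kept.card := rfl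
        _ ≤ (Finset.range n).card := Finset.card_le_card (Finset.filter_subset _ _)
        _ = n := Finset.card_range n
      refine ⟨K, Es', ?_, ?_, ?_, ?_, ?_⟩
      · -- each Es' j ∈ S η
        intro j hj
        have hej := he_mem j hj
        rw [hkept, Finset.mem_filter, Finset.mem_range] at hej
        refine ih η (Order.lt_succ η) hη (Es (e j)) (hEsG _ hej.1) _ ⟨ψ, ?_, ?_, ?_⟩
        · intro b hb; rw [hEs', Finset.mem_filter] at hb; exact hb.2
        · intro a ha b hb hab
          rw [hEs', Finset.mem_filter] at ha hb
          exact hmono a ha.1 b hb.1 hab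
        · intro b hb; rw [hEs', Finset.mem_filter] at hb; exact hle b hb.1
      · -- nonempty
        intro j hj
        have hej := he_mem j hj
        rw [hkept, Finset.mem_filter] at hej
        obtain ⟨b, hb, hψb⟩ := hej.2
        exact ⟨b, by rw [hEs', Finset.mem_filter]; exact ⟨hb, hψb⟩⟩
      · -- successive
        intro j j' hjj' hj' b hb c hc
        rw [hEs', Finset.mem_filter] at hb hc
        have hej := he_mem j (lt_trans hjj' hj')
        have hej' := he_mem j' hj'
        rw [hkept, Finset.mem_filter, Finset.mem_range] at hej hej'
        have hψ : ψ b < ψ c :=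
          hEssucc (e j) (e j') (he_mono j j' hjj' hj') hej'.1 _ hb.2 _ hc.2
        by_contra hbc
        push_neg at hbc
        rcases Nat.lt_or_ge c b with h | h
        · have := hmono c hc.1 b hb.1 h; omega
        · have : b = c := by omega
          subst this; omega
      · -- the mins form a Schreier-one set
        intro a ha
        rw [Finset.mem_image] at ha
        obtain ⟨j, hj, rfl⟩ := ha
        rw [Finset.mem_range] at hj
        have hne : (Es' j).Nonempty := by
          have hej := he_mem j hj
          rw [hkept, Finset.mem_filter] at hej
          obtain ⟨b, hb, hψb⟩ := hej.2
          exact ⟨b, by rw [hEs', Finset.mem_filter]; exact ⟨hb, hψb⟩⟩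
        have hmem' : sInf ((Es' j : Set ℕ)) ∈ Es' j := sInf_mem_finset hne
        set b := sInf ((Es' j : Set ℕ)) with hb
        rw [hEs', Finset.mem_filter] at hmem'
        have hej := he_mem j hj
        rw [hkept, Finset.mem_filter, Finset.mem_range] at hej
        have h1 : n ≤ sInf ((Es (e j) : Set ℕ)) := hngemin _ hej.1
        have h2 : sInf ((Es (e j) : Set ℕ)) ≤ ψ b := finset_sInf_le hmem'.2
        have h3 : ψ b ≤ b := hle b hmem'.1
        calc (Finset.image (fun i => sInf ((Es' i : Set ℕ))) (Finset.range K)).card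
            ≤ (Finset.range K).card := Finset.card_image_le
          _ = K := Finset.card_range K
          _ ≤ n := hKn
          _ ≤ b := by omega
      · -- F' is the union
        ext b
        rw [Finset.mem_biUnion]
        constructor
        · intro hb
          have hψb : ψ b ∈ F := hmem b hb
          rw [hFeq, Finset.mem_biUnion] at hψb
          obtain ⟨i, hi, hψbi⟩ := hψb
          rw [Finset.mem_range] at hi
          have hikept : i ∈ kept := by
            rw [hkept, Finset.mem_filter, Finset.mem_range]
            exact ⟨hi, b, hb, hψbi⟩
          obtain ⟨j, hj, hej⟩ := he_surj i hikept
          exact ⟨j, Finset.mem_range.2 hj, by rw [hEs', Finset.mem_filter]; exact ⟨hb, hej ▸ hψbi⟩⟩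
        · rintro ⟨j, _, hbj⟩
          rw [hEs', Finset.mem_filter] at hbj
          exact hbj.1
    · rw [SS.S_limit ζ hζ hlim] at hF ⊢
      obtain ⟨n, hn, hFn⟩ := hF
      refine ⟨n, fun b hb => le_trans (hn _ (hmem b hb)) (hle b hb), ?_⟩
      exact ih _ (SS.seq_lt ζ hζ hlim n) (lt_trans (SS.seq_lt ζ hζ hlim n) hζ) F hFn F'
        ⟨ψ, hmem, hmono, hle⟩

end GoodS
section Restrict

/-- Restriction of a functional to coordinates `> t`. -/
def restr (t : ℕ) (f : c00) : c00 := f.filter (fun i => t < i)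

lemma restr_apply (t : ℕ) (f : c00) (i : ℕ) :
    restr t f i = if t < i then f i else 0 := by
  simp [restr, Finsupp.filter_apply]

lemma restr_apply_ne {t : ℕ} {f : c00} {i : ℕ} (h : restr t f i ≠ 0) :
    t < i ∧ f i ≠ 0 := by
  rw [restr_apply] at h
  by_cases hti : t < i
  · exact ⟨hti, by simpa [hti] using h⟩
  · simp [hti] at h

lemma restr_support_subset (t : ℕ) (f : c00) : (restr t f).support ⊆ f.support := by
  intro i hi
  rw [Finsupp.mem_support_iff] at hi ⊢
  exact (restr_apply_ne hi).2

lemma restr_eq_self {t : ℕ} {f : c00} (h : ∀ i, f i ≠ 0 → t < i) : restr t f = f := by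
  ext i
  rw [restr_apply]
  by_cases hti : t < i
  · simp [hti]
  · simp only [hti, if_false]
    by_contra hfi
    exact hti (h i (fun hh => hfi hh.symm))

lemma restr_smul (t : ℕ) (c : ℝ) (f : c00) : restr t (c • f) = c • restr t f := by
  ext i
  rw [restr_apply]
  by_cases hti : t < i <;> simp [hti, restr_apply]

lemma restr_sum (t : ℕ) (d : ℕ) (f : ℕ → c00) :
    restr t (∑ q ∈ Finset.range d, f q) = ∑ q ∈ Finset.range d, restr t (f q) := by
  ext i
  rw [restr_apply, Finsupp.finset_sum_apply]
  by_cases hti : t < i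
  · simp only [hti, if_true, Finsupp.finset_sum_apply]
    exact Finset.sum_congr rfl fun q _ => by rw [restr_apply, if_pos hti]
  · simp only [hti, if_false]
    symm
    rw [Finsupp.finset_sum_apply]
    exact Finset.sum_eq_zero fun q _ => by rw [restr_apply, if_neg hti]

lemma restr_neg (t : ℕ) (f : c00) : restr t (-f) = - restr t f := by
  ext i
  rw [restr_apply]
  by_cases hti : t < i <;> simp [hti, restr_apply]

lemma suppLt_mono {f g f' g' : c00} (hf : f'.support ⊆ f.support)
    (hg : g'.support ⊆ g.support) (h : suppLt f g) : suppLt f' g' :=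
  fun i hi j hj => h i (hf hi) j (hg hj)

lemma maxSupp_restr_le (t : ℕ) (f : c00) : maxSupp (restr t f) ≤ maxSupp f :=
  Finset.sup_mono (restr_support_subset t f)

lemma minSupp_le_minSupp_restr {t : ℕ} {f : c00} (h : restr t f ≠ 0) :
    minSupp f ≤ minSupp (restr t f) :=
  minSupp_le (restr_apply_ne (minSupp_mem h)).2

lemma minSupp_restr_gt {t : ℕ} {f : c00} (h : restr t f ≠ 0) :
    t < minSupp (restr t f) := (restr_apply_ne (minSupp_mem h)).1

end Restrict

section WLemmas

variable {Fam : Set (Finset ℕ)}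

lemma Wlevel_ne_zero : ∀ m : ℕ, ∀ f ∈ Wlevel Fam m, f ≠ 0 := by
  intro m
  induction m with
  | zero =>
    rintro f ⟨n, rfl | rfl⟩
    · exact fun h => one_ne_zero (Finsupp.single_eq_zero.1 h)
    · exact neg_ne_zero.2 (fun h => one_ne_zero (Finsupp.single_eq_zero.1 h))
  | succ m ih =>
    rintro f (⟨hf | hf⟩ | hf)
    · exact ih f hf
    · obtain ⟨ℓ, d, g, hℓ, hd, hdℓ, hgG, hgc, rfl⟩ := hf
      have hsum : (∑ q ∈ Finset.range d, g q) ≠ 0 :=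
        sum_chain_ne_zero hd hgc (fun q hq => ih _ (hgG q hq))
      exact smul_ne_zero (by positivity) hsum
    · obtain ⟨d, α, sz, hd, ⟨havg, hc, _, _, _⟩, rfl⟩ := hf
      exact sum_chain_ne_zero hd hc (fun q hq => ih _ (havg q hq).1)

lemma Wset_ne_zero {f : c00} (hf : f ∈ Wset Fam) : f ≠ 0 := by
  rw [Wset, Set.mem_iUnion] at hf
  obtain ⟨m, hm⟩ := hf
  exact Wlevel_ne_zero m f hm

/-- key suffix fact: in a chain of successive supports, once a tail-restriction is
nonzero, all later elements are unaffected by the restriction. -/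
lemma chain_restr_suffix {f : ℕ → c00} {d q₀ t : ℕ} (hq₀ : q₀ < d)
    (h0 : restr t (f q₀) ≠ 0)
    (hc : ∀ q, q + 1 < d → suppLt (f q) (f (q + 1)))
    (hnz : ∀ q < d, f q ≠ 0) :
    ∀ q, q₀ < q → q < d → restr t (f q) = f q := by
  intro q hq₀q hqd
  obtain ⟨hti, hfi⟩ := restr_apply_ne (minSupp_mem h0)
  refine restr_eq_self fun j hj => ?_
  exact lt_trans hti (suppLt_chain hc hnz q₀ q hq₀q hqd _
    (Finsupp.mem_support_iff.2 hfi) _ (Finsupp.mem_support_iff.2 hj))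

/-- Splitting off the (dropped) prefix of a restricted chain sum. -/
lemma restr_chain_sum_eq {f : ℕ → c00} {d q₀ t : ℕ} (hq₀ : q₀ < d)
    (hmin : ∀ q < q₀, restr t (f q) = 0) :
    ∑ q ∈ Finset.range d, restr t (f q) =
      ∑ i ∈ Finset.range (d - q₀), restr t (f (q₀ + i)) := by
  have : Finset.range d = Finset.range q₀ ∪ (Finset.range (d - q₀)).image (q₀ + ·) := by
    ext i
    simp only [Finset.mem_union, Finset.mem_range, Finset.mem_image]
    constructor
    · intro hi
      rcases Nat.lt_or_ge i q₀ with h | h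
      · exact Or.inl h
      · exact Or.inr ⟨i - q₀, by omega, by omega⟩
    · rintro (h | ⟨j, hj, rfl⟩) <;> omega
  rw [this, Finset.sum_union, Finset.sum_image (by intro a _ b _ h; simp only at h; omega)]
  · rw [Finset.sum_eq_zero (fun q hq => hmin q (Finset.mem_range.1 hq)), zero_add]
  · rw [Finset.disjoint_left]
    intro a ha hb
    rw [Finset.mem_range] at ha
    rw [Finset.mem_image] at hb
    obtain ⟨j, _, rfl⟩ := hb
    omega

/-- Restriction of an `α`-average with respect to a set closed under restriction. -/
lemma IsAvg_restr {G : Set c00} (hG0 : ∀ f ∈ G, f ≠ 0)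
    (hGr : ∀ f ∈ G, ∀ t : ℕ, restr t f = 0 ∨ restr t f ∈ G)
    {α : c00} {ℓ t : ℕ} (h : IsAvg G α ℓ) (hne : restr t α ≠ 0) :
    IsAvg G (restr t α) ℓ := by
  obtain ⟨hαG, hℓ, d, f, hd, hdℓ, hfG, hfc, rfl⟩ := h
  have hfnz : ∀ q < d, f q ≠ 0 := fun q hq => hG0 _ (hfG q hq)
  rw [restr_smul, restr_sum] at hne ⊢
  -- find the first index with nonzero restriction
  have hex : ∃ q, q < d ∧ restr t (f q) ≠ 0 := by
    by_contra hno
    push_neg at hno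
    apply hne
    rw [Finset.sum_eq_zero (fun q hq => ?_), smul_zero]
    rcases Nat.lt_or_ge q d with h | h
    · exact hno q (Finset.mem_range.1 hq)
    · exact absurd (Finset.mem_range.1 hq) (by omega)
  classical
  set q₀ := Nat.find hex with hq₀
  obtain ⟨hq₀d, hq₀ne⟩ := Nat.find_spec hex
  have hzero : ∀ q < q₀, restr t (f q) = 0 := by
    intro q hq
    by_contra hne'
    exact (Nat.find_min hex hq) ⟨by omega, hne'⟩
  have hsuffix := chain_restr_suffix hq₀d hq₀ne hfc hfnz
  rw [restr_chain_sum_eq hq₀d hzero]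
  refine ⟨?_, hℓ, d - q₀, fun i => restr t (f (q₀ + i)), by omega, by omega, ?_, ?_, rfl⟩
  · -- restr t α ∈ G
    rcases hGr _ hαG t with h | h
    · rw [restr_smul, restr_sum, restr_chain_sum_eq hq₀d hzero] at h
      exact absurd h (by

        rw [restr_chain_sum_eq hq₀d hzero] at hne
        exact hne)
    · rwa [restr_smul, restr_sum, restr_chain_sum_eq hq₀d hzero] at h
  · intro i hi
    show restr t (f (q₀ + i)) ∈ G
    rcases Nat.eq_zero_or_pos i with h0 | h0
    · subst h0
      rw [Nat.add_zero]
      rcases hGr _ (hfG q₀ hq₀d) t with h | h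
      · exact absurd h hq₀ne
      · exact h
    · rw [hsuffix (q₀ + i) (by omega) (by omega)]
      exact hfG _ (by omega)
  · intro i hi
    show suppLt (restr t (f (q₀ + i))) (restr t (f (q₀ + (i + 1))))
    rw [show q₀ + (i + 1) = q₀ + i + 1 by omega]
    exact suppLt_mono (restr_support_subset _ _) (restr_support_subset _ _)
      (hfc (q₀ + i) (by omega))

end WLemmas
section DomImage

open Classical in
lemma dominates_image {d₀ d : ℕ} (u v : ℕ → ℕ) (hd : d ≤ d₀)
    (hu : ∀ i j, i < j → j < d₀ → u i < u j) (hv : ∀ i j, i < j → j < d → v i < v j)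
    (hle : ∀ i < d, u i ≤ v i) :
    Dominates (Finset.image u (Finset.range d₀)) (Finset.image v (Finset.range d)) := by
  have hvinj : ∀ i j, i < d → j < d → v i = v j → i = j := by
    intro i j hi hj hij
    by_contra hne
    rcases Nat.lt_or_ge i j with h | h
    · exact absurd hij (ne_of_lt (hv i j h hj))
    · exact absurd hij.symm (ne_of_lt (hv j i (by omega) hi))
  set ψ : ℕ → ℕ := fun b => if h : ∃ i, i < d ∧ v i = b then u (Nat.find h) else 0 with hψ
  have hψv : ∀ i < d, ψ (v i) = u i := by
    intro i hi
    have hex : ∃ j, j < d ∧ v j = v i := ⟨i, hi, rfl⟩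
    have hspec := Nat.find_spec hex
    have : Nat.find hex = i := hvinj _ _ hspec.1 hi hspec.2
    simp only [hψ, dif_pos hex, this]
  refine ⟨ψ, ?_, ?_, ?_⟩
  · intro b hb
    rw [Finset.mem_image] at hb
    obtain ⟨i, hi, rfl⟩ := hb
    rw [Finset.mem_range] at hi
    rw [hψv i hi]
    exact Finset.mem_image_of_mem u (Finset.mem_range.2 (by omega))
  · intro a ha b hb hab
    rw [Finset.mem_image] at ha hb
    obtain ⟨i, hi, rfl⟩ := ha
    obtain ⟨j, hj, rfl⟩ := hb
    rw [Finset.mem_range] at hi hj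
    rw [hψv i hi, hψv j hj]
    have hij : i < j := by
      by_contra h
      rcases Nat.eq_or_lt_of_le (Nat.le_of_not_lt h) with h' | h'
      · subst h'
        exact lt_irrefl _ hab
      · have := hv j i h' hi
        omega
    exact hu i j hij (by omega)
  · intro b hb
    rw [Finset.mem_image] at hb
    obtain ⟨i, hi, rfl⟩ := hb
    rw [Finset.mem_range] at hi
    rw [hψv i hi]
    exact hle i hi

end DomImage
section WRestr

variable {Fam : Set (Finset ℕ)}

lemma Wlevel_restr (hFam : ∀ F ∈ Fam, ∀ F' : Finset ℕ, Dominates F F' → F' ∈ Fam) :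
    ∀ m : ℕ, ∀ f ∈ Wlevel Fam m, ∀ t : ℕ, restr t f = 0 ∨ restr t f ∈ Wlevel Fam m := by
  intro m
  induction m with
  | zero =>
    rintro f ⟨n, rfl | rfl⟩ t
    · by_cases htn : t < n
      · right
        rw [restr_eq_self (fun i hi => by
          have : i = n := by
            by_contra hne
            exact hi (Finsupp.single_eq_of_ne' (Ne.symm hne))
          omega)]
        exact ⟨n, Or.inl rfl⟩
      · left
        ext i
        rw [restr_apply]
        by_cases hti : t < i
        · rw [if_pos hti, Finsupp.single_eq_of_ne (by omega)]
          rfl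
        · rw [if_neg hti]; rfl
    · rw [restr_neg]
      by_cases htn : t < n
      · right
        rw [restr_eq_self (fun i hi => by
          have : i = n := by
            by_contra hne
            exact hi (Finsupp.single_eq_of_ne' (Ne.symm hne))
          omega)]
        exact ⟨n, Or.inr rfl⟩
      · left
        rw [neg_eq_zero]
        ext i
        rw [restr_apply]
        by_cases hti : t < i
        · rw [if_pos hti, Finsupp.single_eq_of_ne (by omega)]
          rfl
        · rw [if_neg hti]; rfl
  | succ m ih =>
    have hG0 : ∀ f ∈ Wlevel Fam m, f ≠ 0 := Wlevel_ne_zero m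
    rintro f (⟨hf | hf⟩ | hf) t
    · rcases ih f hf t with h | h
      · exact Or.inl h
      · exact Or.inr (Or.inl (Or.inl h))
    · -- the average case
      obtain ⟨ℓ, d, g, hℓ, hd, hdℓ, hgG, hgc, rfl⟩ := hf
      by_cases hne : restr t ((ℓ : ℝ)⁻¹ • ∑ q ∈ Finset.range d, g q) = 0
      · exact Or.inl hne
      · right; left; right
        have hgnz : ∀ q < d, g q ≠ 0 := fun q hq => hG0 _ (hgG q hq)
        rw [restr_smul, restr_sum] at hne ⊢
        have hex : ∃ q, q < d ∧ restr t (g q) ≠ 0 := by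
          by_contra hno
          push_neg at hno
          apply hne
          rw [Finset.sum_eq_zero (fun q hq => hno q (Finset.mem_range.1 hq)), smul_zero]
        classical
        set q₀ := Nat.find hex with hq₀def
        obtain ⟨hq₀d, hq₀ne⟩ := Nat.find_spec hex
        have hzero : ∀ q < q₀, restr t (g q) = 0 := by
          intro q hq
          by_contra hne'
          exact (Nat.find_min hex hq) ⟨by omega, hne'⟩
        have hsuffix := chain_restr_suffix hq₀d hq₀ne hgc hgnz
        rw [restr_chain_sum_eq hq₀d hzero]
        refine ⟨ℓ, d - q₀, fun i => restr t (g (q₀ + i)), hℓ, by omega, by omega, ?_, ?_, rfl⟩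
        · intro i hi
          show restr t (g (q₀ + i)) ∈ Wlevel Fam m
          rcases Nat.eq_zero_or_pos i with h0 | h0
          · subst h0
            rw [Nat.add_zero]
            rcases ih _ (hgG q₀ hq₀d) t with h | h
            · exact absurd h hq₀ne
            · exact h
          · rw [hsuffix (q₀ + i) (by omega) (by omega)]
            exact hgG _ (by omega)
        · intro i hi
          show suppLt (restr t (g (q₀ + i))) (restr t (g (q₀ + (i + 1))))
          rw [show q₀ + (i + 1) = q₀ + i + 1 by omega]
          exact suppLt_mono (restr_support_subset _ _) (restr_support_subset _ _)
            (hgc (q₀ + i) (by omega))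
    · -- the very fast growing case
      obtain ⟨d, α, sz, hd, ⟨havg, hc, hsz, hms, hadm⟩, rfl⟩ := hf
      have hαnz : ∀ q < d, α q ≠ 0 := fun q hq => hG0 _ (havg q hq).1
      by_cases hne : restr t (∑ q ∈ Finset.range d, α q) = 0
      · exact Or.inl hne
      · right; right
        rw [restr_sum] at hne ⊢
        have hex : ∃ q, q < d ∧ restr t (α q) ≠ 0 := by
          by_contra hno
          push_neg at hno
          exact hne (Finset.sum_eq_zero (fun q hq => hno q (Finset.mem_range.1 hq)))
        classical
        set q₀ := Nat.find hex with hq₀def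
        obtain ⟨hq₀d, hq₀ne⟩ := Nat.find_spec hex
        have hzero : ∀ q < q₀, restr t (α q) = 0 := by
          intro q hq
          by_contra hne'
          exact (Nat.find_min hex hq) ⟨by omega, hne'⟩
        have hsuffix := chain_restr_suffix hq₀d hq₀ne hc hαnz
        have hkeptne : ∀ i < d - q₀, restr t (α (q₀ + i)) ≠ 0 := by
          intro i hi
          rcases Nat.eq_zero_or_pos i with h0 | h0
          · subst h0; rwa [Nat.add_zero]
          · rw [hsuffix (q₀ + i) (by omega) (by omega)]
            exact hαnz _ (by omega)
        rw [restr_chain_sum_eq hq₀d hzero]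
        refine ⟨d - q₀, fun i => restr t (α (q₀ + i)), fun i => sz (q₀ + i), by omega,
          ⟨?_, ?_, ?_, ?_, ?_⟩, rfl⟩
        · intro i hi
          exact IsAvg_restr hG0 (fun g hg t' => ih g hg t') (havg _ (by omega)) (hkeptne i hi)
        · intro i hi
          show suppLt (restr t (α (q₀ + i))) (restr t (α (q₀ + (i + 1))))
          rw [show q₀ + (i + 1) = q₀ + i + 1 by omega]
          exact suppLt_mono (restr_support_subset _ _) (restr_support_subset _ _)
            (hc (q₀ + i) (by omega))
        · intro i hi
          show sz (q₀ + i) < sz (q₀ + (i + 1))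
          rw [show q₀ + (i + 1) = q₀ + i + 1 by omega]
          exact hsz (q₀ + i) (by omega)
        · intro i hi
          show maxSupp (restr t (α (q₀ + i))) < sz (q₀ + (i + 1))
          rw [show q₀ + (i + 1) = q₀ + i + 1 by omega]
          exact lt_of_le_of_lt (maxSupp_restr_le _ _) (hms (q₀ + i) (by omega))
        · refine hFam _ hadm _ ?_
          exact dominates_image (fun q => minSupp (α q))
            (fun i => minSupp (restr t (α (q₀ + i)))) (by omega)
            (fun i j hij hj => suppLt_minSupp_lt (suppLt_chain hc hαnz i j hij hj)
              (hαnz i (by omega)) (hαnz j hj))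
            (fun i j hij hj => suppLt_minSupp_lt
              (suppLt_mono (restr_support_subset _ _) (restr_support_subset _ _)
                (suppLt_chain hc hαnz (q₀ + i) (q₀ + j) (by omega) (by omega)))
              (hkeptne i (by omega)) (hkeptne j hj))
            (fun i hi => le_trans
              (by
                rcases Nat.eq_zero_or_pos q₀ with h0 | h0
                · rw [h0, Nat.zero_add]
                · exact le_of_lt (suppLt_minSupp_lt
                    (suppLt_chain hc hαnz i (q₀ + i) (by omega) (by omega))
                    (hαnz i (by omega)) (hαnz _ (by omega))))
              (minSupp_le_minSupp_restr (hkeptne i hi)))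

lemma Wset_restr (hFam : ∀ F ∈ Fam, ∀ F' : Finset ℕ, Dominates F F' → F' ∈ Fam)
    {f : c00} (hf : f ∈ Wset Fam) (t : ℕ) :
    restr t f = 0 ∨ restr t f ∈ Wset Fam := by
  rw [Wset, Set.mem_iUnion] at hf
  obtain ⟨m, hm⟩ := hf
  rcases Wlevel_restr hFam m f hm t with h | h
  · exact Or.inl h
  · exact Or.inr (by rw [Wset, Set.mem_iUnion]; exact ⟨m, h⟩)

lemma IsAvg_Wset_restr (hFam : ∀ F ∈ Fam, ∀ F' : Finset ℕ, Dominates F F' → F' ∈ Fam)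
    {α : c00} {ℓ t : ℕ} (h : IsAvg (Wset Fam) α ℓ) (hne : restr t α ≠ 0) :
    IsAvg (Wset Fam) (restr t α) ℓ :=
  IsAvg_restr (fun f hf => Wset_ne_zero hf) (fun f hf t' => Wset_restr hFam hf t') h hne

end WRestr
section DotcBlock

lemma dotc_eq_sum (f x : c00) : dotc f x = ∑ i ∈ f.support, f i * x i := rfl

lemma dotc_restr {t : ℕ} (f : c00) {x : c00} (hx : ∀ i, i ≤ t → x i = 0) :
    dotc (restr t f) x = dotc f x := by
  classical
  rw [dotc_eq_sum, dotc_eq_sum]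
  calc ∑ i ∈ (restr t f).support, (restr t f) i * x i
      = ∑ i ∈ (restr t f).support, f i * x i := by
        refine Finset.sum_congr rfl fun i hi => ?_
        obtain ⟨hti, _⟩ := restr_apply_ne (Finsupp.mem_support_iff.1 hi)
        rw [restr_apply, if_pos hti]
    _ = ∑ i ∈ f.support, f i * x i := by
        refine Finset.sum_subset (restr_support_subset t f) fun i hi hni => ?_
        rw [Finsupp.notMem_support_iff, restr_apply] at hni
        by_cases hti : t < i
        · rw [if_pos hti] at hni
          rw [hni, zero_mul]
        · rw [hx i (by omega), mul_zero]

lemma dotc_zero_left (x : c00) : dotc 0 x = 0 := by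
  rw [dotc_eq_sum]
  simp

lemma dotc_eq_zero_of_restr_zero {t : ℕ} {f x : c00} (hf : restr t f = 0)
    (hx : ∀ i, i ≤ t → x i = 0) : dotc f x = 0 := by
  rw [← dotc_restr f hx, hf, dotc_zero_left]

lemma block_minSupp_mono {x : ℕ → c00} (hx : IsBlock x) {a b : ℕ} (hab : a < b) :
    minSupp (x a) < minSupp (x b) :=
  suppLt_minSupp_lt (hx.2 a b hab) (hx.1 a) (hx.1 b)

lemma block_le_minSupp {x : ℕ → c00} (hx : IsBlock x) (k : ℕ) : k ≤ minSupp (x k) := by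
  induction k with
  | zero => exact Nat.zero_le _
  | succ k ih => exact lt_of_le_of_lt ih (block_minSupp_mono hx (Nat.lt_succ_self k))

lemma block_vanish {x : ℕ → c00} (hx : IsBlock x) {k t : ℕ} (h : t < minSupp (x k)) :
    ∀ i, i ≤ t → x k i = 0 := by
  intro i hi
  by_contra hne
  have := minSupp_le hne
  omega

end DotcBlock
section Forward

lemma prefix_sum_eq {M : Type*} [AddCommMonoid M] {g : ℕ → M} {d q₀ : ℕ} (hq₀ : q₀ ≤ d)
    (hzero : ∀ q < q₀, g q = 0) :
    ∑ q ∈ Finset.range d, g q = ∑ i ∈ Finset.range (d - q₀), g (q₀ + i) := by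
  have : Finset.range d = Finset.range q₀ ∪ (Finset.range (d - q₀)).image (q₀ + ·) := by
    ext i
    simp only [Finset.mem_union, Finset.mem_range, Finset.mem_image]
    constructor
    · intro hi
      rcases Nat.lt_or_ge i q₀ with h | h
      · exact Or.inl h
      · exact Or.inr ⟨i - q₀, by omega, by omega⟩
    · rintro (h | ⟨j, hj, rfl⟩) <;> omega
  rw [this, Finset.sum_union, Finset.sum_image (by intro a _ b _ h; simp only at h; omega)]
  · rw [Finset.sum_eq_zero (fun q hq => hzero q (Finset.mem_range.1 hq)), zero_add]
  · rw [Finset.disjoint_left]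
    intro a ha hb
    rw [Finset.mem_range] at ha
    rw [Finset.mem_image] at hb
    obtain ⟨j, _, rfl⟩ := hb
    omega

/-- The data of one stage of the recursive construction in the forward direction. -/
def ValidStage (SS : SchreierSystem) (ξ : Ordinal) (n : ℕ) (ε : ℝ) (x : ℕ → c00)
    (t k d : ℕ) (β : ℕ → c00) (szβ : ℕ → ℕ) : Prop :=
  1 ≤ d ∧
  (∀ q < d, IsAvg (Wset (SS.S (Ordinal.omega0 ^ ξ))) (β q) (szβ q)) ∧
  (∀ q, q + 1 < d → suppLt (β q) (β (q + 1))) ∧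
  (∀ q, q + 1 < d → szβ q < szβ (q + 1)) ∧
  (∀ q, q + 1 < d → maxSupp (β q) < szβ (q + 1)) ∧
  ((Finset.range d).image (fun q => minSupp (β q)) ∈ SS.S (SS.seq (Ordinal.omega0 ^ ξ) n)) ∧
  (∀ q < d, t < szβ q) ∧
  (∀ q < d, ∀ i, β q i ≠ 0 → t < i) ∧
  ε ≤ ∑ q ∈ Finset.range d, |dotc (β q) (x k)|

lemma stage_exists (SS : SchreierSystem) (ξ : Ordinal) (h1 : 1 ≤ ξ) (hξ : ξ < omega1)
    (x : ℕ → c00) (hx : IsBlock x) {ε : ℝ} (hε : 0 < ε) (n : ℕ)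
    (hcon : ∀ j₀ k₀ : ℕ, ∃ k, k₀ ≤ k ∧ ∃ (d : ℕ) (α : ℕ → c00) (sz : ℕ → ℕ),
      IsVFGAdm (Wset (SS.S (Ordinal.omega0 ^ ξ))) (SS.S (SS.seq (Ordinal.omega0 ^ ξ) n)) α sz d ∧
      (∀ q < d, j₀ < sz q) ∧ ε ≤ ∑ q ∈ Finset.range d, |dotc (α q) (x k)|) :
    ∀ t kprev : ℕ, ∃ (k d : ℕ) (β : ℕ → c00) (szβ : ℕ → ℕ),
      kprev < k ∧ ValidStage SS ξ n ε x t k d β szβ := by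
  intro t kprev
  have hlimξ : Order.IsSuccLimit (Ordinal.omega0 ^ ξ) :=
    Ordinal.isSuccLimit_opow_left Ordinal.isSuccLimit_omega0 (by
      intro h
      rw [h] at h1
      exact absurd h1 (by simp))
  have hWξ := omega_opow_lt_omega1 SS ξ hξ
  have hζn : SS.seq (Ordinal.omega0 ^ ξ) n < omega1 :=
    lt_trans (SS.seq_lt _ hWξ hlimξ n) hWξ
  have hFamW : ∀ F ∈ SS.S (Ordinal.omega0 ^ ξ), ∀ F' : Finset ℕ, Dominates F F' →
      F' ∈ SS.S (Ordinal.omega0 ^ ξ) := fun F hF F' hD => goodS SS _ hWξ F hF F' hD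
  have hFamn : ∀ F ∈ SS.S (SS.seq (Ordinal.omega0 ^ ξ) n), ∀ F' : Finset ℕ, Dominates F F' →
      F' ∈ SS.S (SS.seq (Ordinal.omega0 ^ ξ) n) := fun F hF F' hD => goodS SS _ hζn F hF F' hD
  obtain ⟨k, hk, d₀, α, sz, ⟨havg, hc, hszm, hms, hadmF⟩, hsizes, hsum⟩ :=
    hcon t (max (kprev + 1) (t + 1))
  have hαnz : ∀ q < d₀, α q ≠ 0 := fun q hq => Wset_ne_zero (havg q hq).1
  have hxk : ∀ i, i ≤ t → x k i = 0 := by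
    apply block_vanish hx
    have := block_le_minSupp hx k
    omega
  have hex : ∃ q, q < d₀ ∧ restr t (α q) ≠ 0 := by
    by_contra hno
    push_neg at hno
    have hz : ∀ q ∈ Finset.range d₀, |dotc (α q) (x k)| = 0 := fun q hq => by
      rw [dotc_eq_zero_of_restr_zero (hno q (Finset.mem_range.1 hq)) hxk, abs_zero]
    rw [Finset.sum_eq_zero hz] at hsum
    linarith
  classical
  set q₀ := Nat.find hex with hq₀def
  obtain ⟨hq₀d, hq₀ne⟩ := Nat.find_spec hex
  have hzero : ∀ q < q₀, restr t (α q) = 0 := by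
    intro q hq
    by_contra h
    exact Nat.find_min hex hq ⟨by omega, h⟩
  have hsuffix := chain_restr_suffix hq₀d hq₀ne hc hαnz
  have hkeptne : ∀ i < d₀ - q₀, restr t (α (q₀ + i)) ≠ 0 := by
    intro i hi
    rcases Nat.eq_zero_or_pos i with h0 | h0
    · subst h0; rwa [Nat.add_zero]
    · rw [hsuffix (q₀ + i) (by omega) (by omega)]
      exact hαnz _ (by omega)
  refine ⟨k, d₀ - q₀, fun i => restr t (α (q₀ + i)), fun i => sz (q₀ + i), by omega,
    by omega, ?_, ?_, ?_, ?_, ?_, ?_, ?_, ?_⟩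
  · intro i hi
    exact IsAvg_Wset_restr hFamW (havg _ (by omega)) (hkeptne i hi)
  · intro i hi
    show suppLt (restr t (α (q₀ + i))) (restr t (α (q₀ + (i + 1))))
    rw [show q₀ + (i + 1) = q₀ + i + 1 by omega]
    exact suppLt_mono (restr_support_subset _ _) (restr_support_subset _ _)
      (hc (q₀ + i) (by omega))
  · intro i hi
    show sz (q₀ + i) < sz (q₀ + (i + 1))
    rw [show q₀ + (i + 1) = q₀ + i + 1 by omega]
    exact hszm (q₀ + i) (by omega)
  · intro i hi
    show maxSupp (restr t (α (q₀ + i))) < sz (q₀ + (i + 1))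
    rw [show q₀ + (i + 1) = q₀ + i + 1 by omega]
    exact lt_of_le_of_lt (maxSupp_restr_le _ _) (hms (q₀ + i) (by omega))
  · refine hFamn _ hadmF _ ?_
    exact dominates_image (fun q => minSupp (α q))
      (fun i => minSupp (restr t (α (q₀ + i)))) (by omega)
      (fun i j hij hj => suppLt_minSupp_lt (suppLt_chain hc hαnz i j hij hj)
        (hαnz i (by omega)) (hαnz j hj))
      (fun i j hij hj => suppLt_minSupp_lt
        (suppLt_mono (restr_support_subset _ _) (restr_support_subset _ _)
          (suppLt_chain hc hαnz (q₀ + i) (q₀ + j) (by omega) (by omega)))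
        (hkeptne i (by omega)) (hkeptne j hj))
      (fun i hi => le_trans
        (by
          rcases Nat.eq_zero_or_pos q₀ with h0 | h0
          · rw [h0, Nat.zero_add]
          · exact le_of_lt (suppLt_minSupp_lt
              (suppLt_chain hc hαnz i (q₀ + i) (by omega) (by omega))
              (hαnz i (by omega)) (hαnz _ (by omega))))
        (minSupp_le_minSupp_restr (hkeptne i hi)))
  · intro i hi
    exact hsizes (q₀ + i) (by omega)
  · intro i hi j hj
    exact (restr_apply_ne hj).1
  · calc ε ≤ ∑ q ∈ Finset.range d₀, |dotc (α q) (x k)| := hsum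
      _ = ∑ i ∈ Finset.range (d₀ - q₀), |dotc (α (q₀ + i)) (x k)| := by
          refine prefix_sum_eq (by omega) (fun q hq => ?_)
          rw [dotc_eq_zero_of_restr_zero (hzero q hq) hxk, abs_zero]
      _ = ∑ i ∈ Finset.range (d₀ - q₀), |dotc (restr t (α (q₀ + i))) (x k)| := by
          refine Finset.sum_congr rfl fun i _ => ?_
          rw [dotc_restr _ hxk]

end Forward
lemma statement16_forward (SS : SchreierSystem) (ξ : Ordinal) (h1 : 1 ≤ ξ)
    (hξ : ξ < omega1) (x : ℕ → c00) (hx : IsBlock x) {ε : ℝ} (hε : 0 < ε) (n : ℕ)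
    (hcon : ∀ j₀ k₀ : ℕ, ∃ k, k₀ ≤ k ∧ ∃ (d : ℕ) (α : ℕ → c00) (sz : ℕ → ℕ),
      IsVFGAdm (Wset (SS.S (Ordinal.omega0 ^ ξ))) (SS.S (SS.seq (Ordinal.omega0 ^ ξ) n)) α sz d ∧
      (∀ q < d, j₀ < sz q) ∧ ε ≤ ∑ q ∈ Finset.range d, |dotc (α q) (x k)|)
    (hAZ : AlphaZero SS ξ x) : False := by
  classical
  have hstep := stage_exists SS ξ h1 hξ x hx hε n hcon
  choose gk gd gβ gsz hklt hvalid using hstep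
  set B : ℕ × ℕ → ℕ := fun tk =>
    (Finset.range (gd tk.1 tk.2)).sup
      (fun q => max (maxSupp (gβ tk.1 tk.2 q)) (gsz tk.1 tk.2 q)) with hB
  set step : ℕ × ℕ → ℕ × ℕ := fun tk => (B tk, gk tk.1 tk.2) with hstepdef
  set pair : ℕ → ℕ × ℕ := fun p => step^[p] (0, 0) with hpair
  have pair_succ : ∀ p, pair (p + 1) = step (pair p) := fun p =>
    Function.iterate_succ_apply' step p (0, 0)
  set t : ℕ → ℕ := fun p => (pair p).1 with ht
  set kp : ℕ → ℕ := fun p => (pair p).2 with hkp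
  set k : ℕ → ℕ := fun p => gk (t p) (kp p) with hkdef
  set d : ℕ → ℕ := fun p => gd (t p) (kp p) with hddef
  set β : ℕ → ℕ → c00 := fun p => gβ (t p) (kp p) with hβdef
  set szβ : ℕ → ℕ → ℕ := fun p => gsz (t p) (kp p) with hszβdef
  have ht_succ : ∀ p, t (p + 1) = B (pair p) := fun p => congrArg Prod.fst (pair_succ p)
  have hkp_succ : ∀ p, kp (p + 1) = k p := fun p => congrArg Prod.snd (pair_succ p)
  have hVS : ∀ p, ValidStage SS ξ n ε x (t p) (k p) (d p) (β p) (szβ p) := fun p =>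
    hvalid (t p) (kp p)
  have hbound1 : ∀ p q, q < d p → maxSupp (β p q) ≤ t (p + 1) := by
    intro p q hq
    rw [ht_succ p]
    exact le_trans (le_max_left _ _)
      (Finset.le_sup (f := fun q => max (maxSupp (gβ (pair p).1 (pair p).2 q))
        (gsz (pair p).1 (pair p).2 q)) (Finset.mem_range.2 hq))
  have hbound2 : ∀ p q, q < d p → szβ p q ≤ t (p + 1) := by
    intro p q hq
    rw [ht_succ p]
    exact le_trans (le_max_right _ _)
      (Finset.le_sup (f := fun q => max (maxSupp (gβ (pair p).1 (pair p).2 q))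
        (gsz (pair p).1 (pair p).2 q)) (Finset.mem_range.2 hq))
  have hkmono : ∀ p, k p < k (p + 1) := by
    intro p
    show k p < gk (t (p + 1)) (kp (p + 1))
    rw [hkp_succ p]
    exact hklt _ _
  set off : ℕ → ℕ := fun p => ∑ r ∈ Finset.range p, d r with hoff
  have off_succ : ∀ p, off (p + 1) = off p + d p := fun p => Finset.sum_range_succ _ _
  have hd1 : ∀ p, 1 ≤ d p := fun p => (hVS p).1
  have off_mono : ∀ p p', p ≤ p' → off p ≤ off p' := by
    intro p p' h
    exact Finset.sum_le_sum_of_subset (by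
      intro a ha
      rw [Finset.mem_range] at *
      omega)
  have off_ge : ∀ p, p ≤ off p := by
    intro p
    induction p with
    | zero => exact Nat.zero_le _
    | succ p ih =>
      have h1 := off_succ p
      have h2 := hd1 p
      omega
  have hex : ∀ q : ℕ, ∃ p, q < off (p + 1) := fun q => ⟨q, by have := off_ge (q + 1); omega⟩
  set P : ℕ → ℕ := fun q => Nat.find (hex q) with hPdef
  have hP2 : ∀ q, q < off (P q + 1) := fun q => Nat.find_spec (hex q)
  have hP1 : ∀ q, off (P q) ≤ q := by
    intro q
    rcases Nat.eq_zero_or_pos (P q) with h0 | h0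
    · rw [h0]
      exact Nat.zero_le q
    · have h := Nat.find_min (hex q) (show P q - 1 < P q by omega)
      push_neg at h
      rwa [show P q - 1 + 1 = P q by omega] at h
  have hPeq : ∀ p q, off p ≤ q → q < off (p + 1) → P q = p := by
    intro p q hq1 hq2
    have hle : P q ≤ p := Nat.find_min' (hex q) hq2
    by_contra h
    have hlt : P q < p := by omega
    have h3 : off (P q + 1) ≤ off p := off_mono _ _ (by omega)
    have h4 := hP2 q
    omega
  set A : ℕ → c00 := fun q => β (P q) (q - off (P q)) with hA
  set SZ : ℕ → ℕ := fun q => szβ (P q) (q - off (P q)) with hSZ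
  set Fs : ℕ → Finset ℕ := fun p => Finset.Ico (off p) (off (p + 1)) with hFs
  have hAq : ∀ p i, i < d p → A (off p + i) = β p i := by
    intro p i hi
    have h2 : off p + i < off (p + 1) := by rw [off_succ]; omega
    show β (P (off p + i)) (off p + i - off (P (off p + i))) = β p i
    rw [hPeq p (off p + i) (by omega) h2, show off p + i - off p = i by omega]
  have hSZq : ∀ p i, i < d p → SZ (off p + i) = szβ p i := by
    intro p i hi
    have h2 : off p + i < off (p + 1) := by rw [off_succ]; omega
    show szβ (P (off p + i)) (off p + i - off (P (off p + i))) = szβ p i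
    rw [hPeq p (off p + i) (by omega) h2, show off p + i - off p = i by omega]
  have hiP : ∀ q, q - off (P q) < d (P q) := by
    intro q
    have h1 := hP1 q
    have h2 := hP2 q
    rw [off_succ] at h2
    omega
  -- case analysis data for consecutive indices
  have hsplit : ∀ q, (P (q + 1) = P q ∧ q + 1 - off (P q) = (q - off (P q)) + 1 ∧
        (q - off (P q)) + 1 < d (P q)) ∨
      (P (q + 1) = P q + 1 ∧ q + 1 - off (P q + 1) = 0 ∧ q + 1 = off (P q + 1)) := by
    intro q
    have h1 := hP1 q
    have h2 := hP2 q
    by_cases hc : q + 1 < off (P q + 1)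
    · left
      have := hPeq (P q) (q + 1) (by omega) hc
      have h3 := hiP q
      have h4 := off_succ (P q)
      refine ⟨this, by omega, by omega⟩
    · right
      have heq : q + 1 = off (P q + 1) := by omega
      have hlt : q + 1 < off (P q + 1 + 1) := by
        have := off_succ (P q + 1)
        have := hd1 (P q + 1)
        omega
      have := hPeq (P q + 1) (q + 1) (by omega) hlt
      exact ⟨this, by omega, heq⟩
  have havgGlob : ∀ q, IsAvg (Wset (SS.S (Ordinal.omega0 ^ ξ))) (A q) (SZ q) := by
    intro q
    exact (hVS (P q)).2.1 _ (hiP q)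
  have hchainGlob : ∀ q, suppLt (A q) (A (q + 1)) := by
    intro q
    rcases hsplit q with ⟨he1, he2, he3⟩ | ⟨he1, he2, he3⟩
    · have eA : A (q + 1) = β (P q) ((q - off (P q)) + 1) := by
        show β (P (q + 1)) (q + 1 - off (P (q + 1))) = _
        rw [he1, he2]
      rw [eA]
      exact (hVS (P q)).2.2.1 _ he3
    · have eA : A (q + 1) = β (P q + 1) 0 := by
        show β (P (q + 1)) (q + 1 - off (P (q + 1))) = _
        rw [he1, he2]
      rw [eA]
      intro a ha b hb
      have haa : a ≤ maxSupp (A q) := le_maxSupp (Finsupp.mem_support_iff.1 ha)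
      have h4 : maxSupp (A q) ≤ t (P q + 1) := hbound1 (P q) _ (hiP q)
      have h5 : t (P q + 1) < b := (hVS (P q + 1)).2.2.2.2.2.2.2.1 0 (hd1 _) b
        (Finsupp.mem_support_iff.1 hb)
      omega
  have hSZGlob : ∀ q, SZ q < SZ (q + 1) := by
    intro q
    rcases hsplit q with ⟨he1, he2, he3⟩ | ⟨he1, he2, he3⟩
    · have eS : SZ (q + 1) = szβ (P q) ((q - off (P q)) + 1) := by
        show szβ (P (q + 1)) (q + 1 - off (P (q + 1))) = _
        rw [he1, he2]
      rw [eS]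
      exact (hVS (P q)).2.2.2.1 _ he3
    · have eS : SZ (q + 1) = szβ (P q + 1) 0 := by
        show szβ (P (q + 1)) (q + 1 - off (P (q + 1))) = _
        rw [he1, he2]
      rw [eS]
      have h4 : SZ q ≤ t (P q + 1) := hbound2 (P q) _ (hiP q)
      have h5 : t (P q + 1) < szβ (P q + 1) 0 := (hVS (P q + 1)).2.2.2.2.2.2.1 0 (hd1 _)
      omega
  have hmsGlob : ∀ q, maxSupp (A q) < SZ (q + 1) := by
    intro q
    rcases hsplit q with ⟨he1, he2, he3⟩ | ⟨he1, he2, he3⟩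
    · have eS : SZ (q + 1) = szβ (P q) ((q - off (P q)) + 1) := by
        show szβ (P (q + 1)) (q + 1 - off (P (q + 1))) = _
        rw [he1, he2]
      rw [eS]
      exact (hVS (P q)).2.2.2.2.1 _ he3
    · have eS : SZ (q + 1) = szβ (P q + 1) 0 := by
        show szβ (P (q + 1)) (q + 1 - off (P (q + 1))) = _
        rw [he1, he2]
      rw [eS]
      have h4 : maxSupp (A q) ≤ t (P q + 1) := hbound1 (P q) _ (hiP q)
      have h5 : t (P q + 1) < szβ (P q + 1) 0 := (hVS (P q + 1)).2.2.2.2.2.2.1 0 (hd1 _)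
      omega
  have hFssucc : ∀ p p', p < p' → ∀ i ∈ Fs p, ∀ j ∈ Fs p', i < j := by
    intro p p' hpp' i hi j hj
    rw [hFs] at hi hj
    simp only [Finset.mem_Ico] at hi hj
    have := off_mono (p + 1) p' (by omega)
    omega
  have hFsimage : ∀ p, Fs p = (Finset.range (d p)).image (fun i => off p + i) := by
    intro p
    ext a
    simp only [hFs, Finset.mem_Ico, Finset.mem_image, Finset.mem_range]
    have := off_succ p
    constructor
    · intro ha
      exact ⟨a - off p, by omega, by omega⟩
    · rintro ⟨i, hi, rfl⟩
      omega
  have hFsadm : ∀ p, (Fs p).image (fun q => minSupp (A q)) ∈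
      SS.S (SS.seq (Ordinal.omega0 ^ ξ) n) := by
    intro p
    have heq : (Fs p).image (fun q => minSupp (A q))
        = (Finset.range (d p)).image (fun i => minSupp (β p i)) := by
      rw [hFsimage p, Finset.image_image]
      refine Finset.image_congr fun i hi => ?_
      rw [Finset.mem_coe, Finset.mem_range] at hi
      show minSupp (A (off p + i)) = minSupp (β p i)
      rw [hAq p i hi]
    rw [heq]
    exact (hVS p).2.2.2.2.2.1
  have hkSM : StrictMono k := strictMono_nat_of_lt_succ hkmono
  have htend := hAZ n A SZ havgGlob hchainGlob hSZGlob hmsGlob Fs hFssucc hFsadm k hkSM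
  rw [Metric.tendsto_atTop] at htend
  obtain ⟨N, hN⟩ := htend ε hε
  have hdist := hN N le_rfl
  rw [Real.dist_eq, sub_zero] at hdist
  have hge : ε ≤ ∑ q ∈ Fs N, |dotc (A q) (x (k N))| := by
    calc ε ≤ ∑ i ∈ Finset.range (d N), |dotc (β N i) (x (k N))| :=
          (hVS N).2.2.2.2.2.2.2.2
      _ = ∑ q ∈ Fs N, |dotc (A q) (x (k N))| := by
          rw [hFsimage N, Finset.sum_image (by intro a _ b _ h; simp only at h; omega)]
          refine Finset.sum_congr rfl fun i hi => ?_
          rw [Finset.mem_range] at hi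
          rw [hAq N i hi]
  have := le_abs_self (∑ q ∈ Fs N, |dotc (A q) (x (k N))|)
  linarith
/-- **Statement 16.** For a block sequence `(x_k)` in `𝔛_{0,1}^{ω^ξ}`,
`α_{<ω^ξ}((x_k)) = 0` iff for every `ε > 0` and `n ∈ ℕ` there exist `j₀, k₀` such that
for every `k ≥ k₀` and every `𝓢_{ξ_n}`-admissible very fast growing sequence
`(α_q)_{q<d}` of `α`-averages in `W` with all sizes `> j₀`, `Σ_{q<d} |α_q(x_k)| < ε`. -/
theorem statement16 (SS : SchreierSystem) (ξ : Ordinal) (h1 : 1 ≤ ξ) (hξ : ξ < omega1)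
    (x : ℕ → c00) (hx : IsBlock x) :
    AlphaZero SS ξ x ↔
      ∀ ε : ℝ, 0 < ε → ∀ n : ℕ, ∃ j₀ k₀ : ℕ, ∀ k : ℕ, k₀ ≤ k →
        ∀ (d : ℕ) (α : ℕ → c00) (sz : ℕ → ℕ),
          IsVFGAdm (Wset (SS.S (Ordinal.omega0 ^ ξ)))
            (SS.S (SS.seq (Ordinal.omega0 ^ ξ) n)) α sz d →
          (∀ q < d, j₀ < sz q) →
          ∑ q ∈ Finset.range d, |dotc (α q) (x k)| < ε := by
  constructor
  · intro hAZ ε hε n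
    by_contra hcon
    push_neg at hcon
    exact statement16_forward SS ξ h1 hξ x hx hε n hcon hAZ
  · intro hRHS n α sz havg hchain hszmono hms F hFsucc hFadm m hm
    have hαnz : ∀ q : ℕ, α q ≠ 0 := fun q => Wset_ne_zero (havg q).1
    have hszSM : StrictMono sz := strictMono_nat_of_lt_succ hszmono
    rw [Metric.tendsto_atTop]
    intro ε hε
    obtain ⟨j₀, k₀, hj₀⟩ := hRHS ε hε n
    -- eventually all indices in `F k` exceed `j₀`
    have hFbig : ∀ j : ℕ, ∃ K, ∀ k, K ≤ k → ∀ q ∈ F k, j ≤ q := by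
      intro j
      induction j with
      | zero => exact ⟨0, fun k _ q _ => Nat.zero_le q⟩
      | succ j ihj =>
        obtain ⟨K, hK⟩ := ihj
        by_cases hex : ∃ k, K ≤ k ∧ (F k).Nonempty
        · obtain ⟨k₁, hk₁, q₁, hq₁⟩ := hex
          refine ⟨k₁ + 1, fun k hk q hq => ?_⟩
          have := hFsucc k₁ k (by omega) q₁ hq₁ q hq
          have := hK k₁ hk₁ q₁ hq₁
          omega
        · push_neg at hex
          refine ⟨K, fun k hk q hq => ?_⟩
          exact ((Finset.not_nonempty_iff_eq_empty.2 (hex k hk)) (⟨q, hq⟩ : (F k).Nonempty)).elim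

    obtain ⟨K₁, hK₁⟩ := hFbig (j₀ + 1)
    refine ⟨max K₁ k₀, fun k hk => ?_⟩
    have hkK₁ : K₁ ≤ k := le_trans (le_max_left _ _) hk
    have hkk₀ : k₀ ≤ m k := le_trans (le_trans (le_max_right _ _) hk) hm.le_apply
    classical
    set G := F k with hG
    set d := G.card with hd
    set e : ℕ → ℕ := fun i => if h : i < d then G.orderEmbOfFin rfl ⟨i, h⟩ else 0 with he
    have he_mem : ∀ i < d, e i ∈ G := by
      intro i hi
      simp only [he, dif_pos hi]
      exact Finset.orderEmbOfFin_mem G rfl _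
    have he_mono : ∀ i j, i < j → j < d → e i < e j := by
      intro i j hij hj
      simp only [he, dif_pos hj, dif_pos (lt_trans hij hj)]
      exact (G.orderEmbOfFin rfl).strictMono (by exact_mod_cast hij)
    have he_image : Finset.image e (Finset.range d) = G := by
      ext a
      simp only [Finset.mem_image, Finset.mem_range]
      constructor
      · rintro ⟨i, hi, rfl⟩; exact he_mem i hi
      · intro ha
        have : a ∈ Set.range (G.orderEmbOfFin (rfl : G.card = d)) := by
          rw [Finset.range_orderEmbOfFin]; exact_mod_cast ha
        obtain ⟨⟨i, hi⟩, hia⟩ := this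
        exact ⟨i, hi, by simp only [he]; rw [dif_pos hi]; exact hia⟩
    have hvfg : IsVFGAdm (Wset (SS.S (Ordinal.omega0 ^ ξ)))
        (SS.S (SS.seq (Ordinal.omega0 ^ ξ) n)) (fun i => α (e i)) (fun i => sz (e i)) d := by
      refine ⟨fun i _ => havg (e i), ?_, ?_, ?_, ?_⟩
      · intro i hi
        refine suppLt_chain (d := e (i + 1) + 1) (fun q _ => hchain q)
          (fun q _ => hαnz q) _ _ (he_mono i (i + 1) (by omega) hi) (by omega)
      · intro i hi
        exact hszSM (he_mono i (i + 1) (by omega) hi)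
      · intro i hi
        exact lt_of_lt_of_le (hms (e i)) (hszSM.monotone (he_mono i (i + 1) (by omega) hi))
      · have : Finset.image (fun i => minSupp (α (e i))) (Finset.range d)
            = Finset.image (fun q => minSupp (α q)) G := by
          rw [← he_image, Finset.image_image]
          rfl
        rw [this]
        exact hFadm k
    have hsizes : ∀ i < d, j₀ < sz (e i) := by
      intro i hi
      have h1 : j₀ + 1 ≤ e i := hK₁ k hkK₁ _ (he_mem i hi)
      have h2 : e i ≤ sz (e i) := hszSM.le_apply
      omega
    have hsum := hj₀ (m k) hkk₀ d _ _ hvfg hsizes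
    have heq : ∑ q ∈ G, |dotc (α q) (x (m k))|
        = ∑ i ∈ Finset.range d, |dotc (α (e i)) (x (m k))| := by
      rw [← he_image, Finset.sum_image]
      intro a ha b hb hab
      by_contra hne
      rcases Nat.lt_or_ge a b with h | h
      · exact absurd hab (ne_of_lt (he_mono a b h (Finset.mem_range.1 hb)))
      · exact absurd hab.symm (ne_of_lt (he_mono b a (by omega) (Finset.mem_range.1 ha)))
    rw [Real.dist_eq, sub_zero, abs_of_nonneg (Finset.sum_nonneg fun q _ => abs_nonneg _)]
    rw [heq]
    exact hsum
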